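/- arXiv:2111.08641 — 4 statements merged into one kernel-verified Lean document; each statement's English description precedes it below -/
import Mathlib

section
/- Let S(n) = Σ_{k=0}^{n} binom(n,k)^2 · binom(n−k, k). For every nonnegative integer n, S(n) ≡ (−1)^{d(n)} (mod 5) if every base-5 digit of n belongs to {0,1,3}, where d(n) is the number of base-5 digits of n equal to 3; and S(n) ≡ 0 (mod 5) otherwise. -/
/-- `S(n) = Σ_{k=0}^n binom(n,k)^2 binom(n-k,k)`. -/
def Sseq (n : ℕ) : ℕ :=
  ∑ k ∈ Finset.range (n + 1), n.choose k ^ 2 * (n - k).choose k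

private instance fact5 : Fact (Nat.Prime 5) := ⟨by norm_num⟩

private lemma lucas5 (n k : ℕ) :
    ((n.choose k : ZMod 5)) = ((n % 5).choose (k % 5) : ZMod 5) * ((n / 5).choose (k / 5)) := by
  have h := Choose.choose_modEq_choose_mod_mul_choose_div (n := n) (k := k) (p := 5)
  have := (ZMod.intCast_eq_intCast_iff _ _ _).mpr h
  push_cast at this
  exact this

private lemma key (a b : ℕ) (hb : b < 5) :
    ((Sseq (5 * a + b) : ZMod 5)) = (Sseq a : ZMod 5) * (Sseq b : ZMod 5) := by
  have h1 : (Sseq (5 * a + b) : ZMod 5)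
      = ∑ k ∈ Finset.range (5 * (a + 1)),
          (((5 * a + b).choose k : ZMod 5)) ^ 2 * (((5 * a + b - k).choose k : ZMod 5)) := by
    rw [Sseq]
    push_cast
    apply Finset.sum_subset
    · exact Finset.range_subset_range.mpr (by omega)
    · intro k _ hk
      have hlt : 5 * a + b < k := by
        simp only [Finset.mem_range] at hk; omega
      simp [Nat.choose_eq_zero_of_lt hlt]
  have h2 : (Sseq a : ZMod 5) * (Sseq b : ZMod 5)
      = ∑ p ∈ Finset.range (a + 1) ×ˢ Finset.range 5,
          ((a.choose p.1 : ZMod 5)) ^ 2 * ((a - p.1).choose p.1 : ZMod 5) *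
          (((b.choose p.2 : ZMod 5)) ^ 2 * ((b - p.2).choose p.2 : ZMod 5)) := by
    have hbext : (Sseq b : ZMod 5)
        = ∑ v ∈ Finset.range 5, ((b.choose v : ZMod 5)) ^ 2 * ((b - v).choose v : ZMod 5) := by
      rw [Sseq]
      push_cast
      apply Finset.sum_subset
      · exact Finset.range_subset_range.mpr (by omega)
      · intro v _ hv
        have hlt : b < v := by simp only [Finset.mem_range] at hv; omega
        simp [Nat.choose_eq_zero_of_lt hlt]
    rw [hbext, Sseq]
    push_cast
    rw [Finset.sum_mul_sum, ← Finset.sum_product']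
  rw [h1, h2]
  apply Finset.sum_nbij' (fun k => (k / 5, k % 5)) (fun p => 5 * p.1 + p.2)
  · intro k hk
    simp only [Finset.mem_range] at hk
    simp only [Finset.mem_product, Finset.mem_range]
    omega
  · intro p hp
    simp only [Finset.mem_product, Finset.mem_range] at hp
    simp only [Finset.mem_range]
    omega
  · intro k _; omega
  · intro p hp
    simp only [Finset.mem_product, Finset.mem_range] at hp
    simp only [Prod.ext_iff]
    omega
  · intro k hk
    simp only [Finset.mem_range] at hk
    set u := k / 5 with hu
    set v := k % 5 with hv
    have hk5 : k = 5 * u + v := by omega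
    have hv5 : v < 5 := by omega
    have hua : u ≤ a := by omega
    have hm1 : (5 * a + b) % 5 = b := by omega
    have hd1 : (5 * a + b) / 5 = a := by omega
    have hm2 : k % 5 = v := by omega
    have hd2 : k / 5 = u := by omega
    rw [lucas5 (5 * a + b) k, hm1, hd1, hm2, hd2]
    by_cases hvb : v ≤ b
    · have hm3 : (5 * a + b - k) % 5 = b - v := by omega
      have hd3 : (5 * a + b - k) / 5 = a - u := by omega
      rw [lucas5 (5 * a + b - k) k, hm3, hd3, hm2, hd2]
      ring
    · have h0 : b.choose v = 0 := Nat.choose_eq_zero_of_lt (by omega)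
      rw [h0]
      push_cast
      ring

private lemma modeq_iff (x : ℕ) (y : ℤ) :
    (x : ℤ) ≡ y [ZMOD 5] ↔ ((x : ZMod 5) = (y : ZMod 5)) := by
  have h := (ZMod.intCast_eq_intCast_iff (x : ℤ) y 5).symm
  push_cast at h
  exact h

theorem Sseq_mod_five_digits (n : ℕ) :
    (if ∀ d ∈ Nat.digits 5 n, d = 0 ∨ d = 1 ∨ d = 3 then
      (Sseq n : ℤ) ≡ (-1) ^ ((Nat.digits 5 n).count 3) [ZMOD 5]
    else (Sseq n : ℤ) ≡ 0 [ZMOD 5]) := by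
  induction n using Nat.strong_induction_on with
  | _ n ih =>
  rcases eq_or_ne n 0 with rfl | hn
  · simp [Sseq]
  · have hpos : 0 < n := Nat.pos_of_ne_zero hn
    have hb : n % 5 < 5 := Nat.mod_lt _ (by norm_num)
    have hna : n / 5 < n := Nat.div_lt_self hpos (by norm_num)
    have hdig : Nat.digits 5 n = n % 5 :: Nat.digits 5 (n / 5) :=
      Nat.digits_def' (by norm_num) hpos
    have hk : (Sseq n : ZMod 5) = (Sseq (n / 5) : ZMod 5) * (Sseq (n % 5) : ZMod 5) := by
      have := key (n / 5) (n % 5) hb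
      rwa [show 5 * (n / 5) + n % 5 = n by omega] at this
    have IH := ih (n / 5) hna
    rw [hdig]
    simp only [List.mem_cons, forall_eq_or_imp, List.count_cons]
    by_cases hcondb : n % 5 = 0 ∨ n % 5 = 1 ∨ n % 5 = 3
    · by_cases hconda : ∀ d ∈ Nat.digits 5 (n / 5), d = 0 ∨ d = 1 ∨ d = 3
      · rw [if_pos ⟨hcondb, hconda⟩]
        rw [if_pos hconda] at IH
        rw [modeq_iff] at IH ⊢
        rw [hk, IH]
        rcases hcondb with h | h | h <;> rw [h] <;> push_cast <;>
          simp only [show ¬(3 = 0) by decide, show ¬(3 = 1) by decide, if_false, if_true,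
            add_zero, reduceIte]
        · rw [show ((Sseq 0 : ℕ) : ZMod 5) = 1 by decide]; ring
        · rw [show ((Sseq 1 : ℕ) : ZMod 5) = 1 by decide]; ring
        · rw [show ((Sseq 3 : ℕ) : ZMod 5) = -1 by decide]; ring
      · rw [if_neg (by tauto)]
        rw [if_neg hconda] at IH
        rw [modeq_iff] at IH ⊢
        rw [hk, IH]
        push_cast
        ring
    · rw [if_neg (by tauto)]
      rw [modeq_iff]
      rw [hk]
      have h24 : n % 5 = 2 ∨ n % 5 = 4 := by omega
      have hb0 : (Sseq (n % 5) : ZMod 5) = 0 := by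
        rcases h24 with h | h <;> rw [h] <;> decide
      rw [hb0, mul_zero]
      push_cast
      ring
end

section
/- Let p be an odd prime and a, b, c integers with p ∤ c. Then the coefficient of x^{-1} in (a x^{-1} + b + c x)^{p−1} (equivalently, the constant term of (a x^{-1}+b+cx)^{p−1}·x, which equals (T(p) − b·T(p−1))/(2c) where T(n) = Σ_{k=0}^{⌊n/2⌋} binom(n,2k)binom(2k,k)(ac)^k b^{n−2k}) satisfies 2c · ct[(a x^{-1}+b+cx)^{p−1} x] ≡ b·(1 − ((b²−4ac)/p)) (mod p). -/
open Finset

/-- The generalized central trinomial numbers `T_{a,b,c}(n)`. -/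
def genTrinomial (a b c : ℤ) (n : ℕ) : ℤ :=
  ∑ k ∈ Finset.range (n / 2 + 1),
    (n.choose (2 * k) : ℤ) * ((2 * k).choose k : ℤ) * (a * c) ^ k * b ^ (n - 2 * k)

section Aux

variable {p : ℕ} [hp : Fact p.Prime]

lemma natCast_ne_zero_zmod {j : ℕ} (h1 : 0 < j) (h2 : j < p) : ((j : ℕ) : ZMod p) ≠ 0 := by
  rw [Ne, ZMod.natCast_eq_zero_iff]
  intro hd
  exact absurd (Nat.le_of_dvd h1 hd) (by omega)

/-- `C(p-1, j) ≡ (-1)^j (mod p)`. -/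
lemma choose_pred_cast (j : ℕ) (hj : j < p) :
    (((p - 1).choose j : ℕ) : ZMod p) = (-1) ^ j := by
  induction j with
  | zero => simp
  | succ n ih =>
    have hn : n < p := Nat.lt_of_succ_lt hj
    have hpas : p.choose (n + 1) = (p - 1).choose n + (p - 1).choose (n + 1) := by
      conv_lhs => rw [show p = (p - 1) + 1 by omega]
      exact Nat.choose_succ_succ _ _
    have hdvd : p ∣ p.choose (n + 1) :=
      Nat.Prime.dvd_choose_self hp.out (Nat.succ_ne_zero n) hj
    have h0 : ((p.choose (n + 1) : ℕ) : ZMod p) = 0 :=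
      (ZMod.natCast_eq_zero_iff _ _).mpr hdvd
    have h := congrArg (Nat.cast : ℕ → ZMod p) hpas
    push_cast at h
    rw [h0, ih hn] at h
    have hgoal : (((p - 1).choose (n + 1) : ℕ) : ZMod p) = -(-1) ^ n := by
      linear_combination -h
    rw [hgoal]; ring

/-- `C(2k,k) ≡ (-4)^k C((p-1)/2, k) (mod p)` for `k ≤ p/2`. -/
lemma central_binom_cast (hodd : Odd p) (k : ℕ) (hk : k ≤ p / 2) :
    (((2 * k).choose k : ℕ) : ZMod p) = (-4) ^ k * (((p / 2).choose k : ℕ) : ZMod p) := by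
  have hpm : p = 2 * (p / 2) + 1 := by obtain ⟨t, ht⟩ := hodd; omega
  set m := p / 2 with hm
  clear_value m
  induction k with
  | zero => simp
  | succ n ih =>
    have hn : n ≤ m := by omega
    have hA := ih (by omega)
    -- central binomial recurrence
    have e1 : ((n : ZMod p) + 1) * (((2 * (n + 1)).choose (n + 1) : ℕ) : ZMod p)
        = 2 * (2 * n + 1) * (((2 * n).choose n : ℕ) : ZMod p) := by
      have h := Nat.succ_mul_centralBinom_succ n
      simp only [Nat.centralBinom] at h
      have := congrArg (Nat.cast : ℕ → ZMod p) h
      push_cast at this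
      convert this using 2 <;> ring_nf
    -- choose recurrence
    have e2 : (((m.choose (n + 1)) : ℕ) : ZMod p) * ((n : ZMod p) + 1)
        = ((m.choose n : ℕ) : ZMod p) * (((m - n : ℕ) : ℕ) : ZMod p) := by
      have h := Nat.choose_succ_right_eq m n
      have := congrArg (Nat.cast : ℕ → ZMod p) h
      push_cast at this
      exact this
    -- 2*(m-n) ≡ -(2n+1)
    have h2 : (2 : ZMod p) * (((m - n : ℕ) : ℕ) : ZMod p) = -(2 * (n : ZMod p) + 1) := by
      have hnat : 2 * (m - n) + (2 * n + 1) = p := by omega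
      have := congrArg (Nat.cast : ℕ → ZMod p) hnat
      push_cast [ZMod.natCast_self] at this
      linear_combination this
    have hne1 : ((n : ZMod p) + 1) ≠ 0 := by
      have : (((n + 1 : ℕ) : ℕ) : ZMod p) ≠ 0 := natCast_ne_zero_zmod (by omega) (by omega)
      push_cast at this
      exact this
    have hne2 : (2 : ZMod p) ≠ 0 := by
      have : (((2 : ℕ) : ℕ) : ZMod p) ≠ 0 := natCast_ne_zero_zmod (by omega) (by omega)
      push_cast at this
      exact this
    apply mul_left_cancel₀ (mul_ne_zero hne1 hne2)
    linear_combination 2 * e1 - 2 * (-4 : ZMod p) ^ (n + 1) * e2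
      + 4 * (2 * (n : ZMod p) + 1) * hA
      - (-4 : ZMod p) ^ (n + 1) * ((m.choose n : ℕ) : ZMod p) * h2

end Aux

theorem gen_trinomial_pm1_x (p : ℕ) [Fact p.Prime] (hodd : Odd p) (a b c : ℤ)
    (hc : ¬ ((p : ℤ) ∣ c)) :
    genTrinomial a b c p - b * genTrinomial a b c (p - 1) ≡
      b * (1 - legendreSym p (b ^ 2 - 4 * a * c)) [ZMOD p] := by
  have hp := Fact.out (p := p.Prime)
  have hpm : p = 2 * (p / 2) + 1 := by obtain ⟨t, ht⟩ := hodd; omega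
  set m := p / 2 with hm
  have hA : ((genTrinomial a b c p : ℤ) : ZMod p) = (b : ZMod p) := by
    simp only [genTrinomial]
    push_cast
    rw [Finset.sum_eq_single_of_mem 0 (by simp)]
    · simp [ZMod.pow_card]
    · intro k hk hk0
      have hkm : k < p / 2 + 1 := mem_range.mp hk
      have h0 : ((p.choose (2 * k) : ℕ) : ZMod p) = 0 := by
        rw [ZMod.natCast_eq_zero_iff]
        exact Nat.Prime.dvd_choose_self hp (by omega) (by omega)
      simp [h0]
  have hB : ((genTrinomial a b c (p - 1) : ℤ) : ZMod p)
      = (((b ^ 2 - 4 * a * c : ℤ) : ZMod p)) ^ m := by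
    have hm1 : (p - 1) / 2 = m := by omega
    simp only [genTrinomial, hm1]
    push_cast
    rw [show (((b : ZMod p)) ^ 2 - 4 * (a : ZMod p) * (c : ZMod p))
        = (-(4 * ((a : ZMod p) * c)) + ((b : ZMod p)) ^ 2) by ring, add_pow]
    refine Finset.sum_congr rfl fun k hk => ?_
    have hkm : k ≤ m := by have := mem_range.mp hk; omega
    rw [choose_pred_cast (2 * k) (by omega), central_binom_cast hodd k hkm]
    have hb : (b : ZMod p) ^ (p - 1 - 2 * k) = (((b : ZMod p)) ^ 2) ^ (m - k) := by
      rw [← pow_mul]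
      congr 1
      omega
    have hneg : ((-1 : ZMod p)) ^ (2 * k) = 1 := by
      rw [pow_mul]; norm_num
    rw [hb, hneg]
    ring
  rw [← ZMod.intCast_eq_intCast_iff]
  push_cast
  rw [hA, hB, legendreSym.eq_pow]
  push_cast
  ring
end

section
/- For every prime p, the Catalan number C(p−1) = binom(2(p−1), p−1)/p satisfies C(p−1) ≡ −1 (mod p). -/
lemma catalan_int_eq (n : ℕ) :
    (catalan n : ℤ) = (2 * n).choose n - (2 * n).choose (n + 1) := by
  have h := succ_mul_catalan_eq_centralBinom n
  have h2 : ((2 * n).choose (n + 1) : ℤ) * (n + 1) = (2 * n).choose n * n := by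
    have := Nat.choose_succ_right_eq (2 * n) n
    have h3 : 2 * n - n = n := by omega
    rw [h3] at this
    exact_mod_cast this
  have hne : ((n : ℤ) + 1) ≠ 0 := by positivity
  apply mul_left_cancel₀ hne
  have h' : ((n : ℤ) + 1) * catalan n = (2 * n).choose n := by
    exact_mod_cast congrArg (Nat.cast : ℕ → ℤ) h
  linear_combination h' + h2

theorem catalan_pred_prime (p : ℕ) (hp : p.Prime) :
    (catalan (p - 1) : ℤ) ≡ -1 [ZMOD p] := by
  haveI : Fact p.Prime := ⟨hp⟩
  have hp2 : 2 ≤ p := hp.two_le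
  rw [catalan_int_eq]
  have he : 2 * (p - 1) = p + (p - 2) := by omega
  have hmod : (2 * (p - 1)) % p = p - 2 := by
    rw [he, Nat.add_mod_left, Nat.mod_eq_of_lt (by omega)]
  have hdiv : (2 * (p - 1)) / p = 1 := by
    rw [he, Nat.add_div_left _ (by omega), Nat.div_eq_of_lt (by omega)]
  have h1 : ((2 * (p - 1)).choose (p - 1) : ℤ) ≡ 0 [ZMOD p] := by
    have := Choose.choose_modEq_choose_mod_mul_choose_div (n := 2 * (p - 1)) (k := p - 1) (p := p)
    rw [hmod, hdiv, Nat.mod_eq_of_lt (show p - 1 < p by omega), Nat.div_eq_of_lt (show p - 1 < p by omega)] at this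
    rw [show (p - 2).choose (p - 1) = 0 from Nat.choose_eq_zero_of_lt (by omega)] at this
    simpa using this
  have h2 : ((2 * (p - 1)).choose (p - 1 + 1) : ℤ) ≡ 1 [ZMOD p] := by
    have hk : p - 1 + 1 = p := by omega
    have := Choose.choose_modEq_choose_mod_mul_choose_div (n := 2 * (p - 1)) (k := p) (p := p)
    rw [hmod, hdiv, Nat.mod_self, Nat.div_self (by omega), Nat.choose_zero_right,
      Nat.choose_self] at this
    rw [hk]
    simpa using this
  calc ((2 * (p - 1)).choose (p - 1) : ℤ) - (2 * (p - 1)).choose (p - 1 + 1)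
      ≡ 0 - 1 [ZMOD p] := Int.ModEq.sub h1 h2
    _ = -1 := by ring
end

section
/- The Catalan number C(n) is divisible by 3 if and only if n+1 has a ternary digit equal to 2 in some position i ≥ 1, or (equivalently stated): C(n) ≡ (−1)^{δ*(n+1)} (mod 3) if every ternary digit of n+1 in position i ≥ 1 is 0 or 1 (where δ*(m) counts the positions i ≥ 1 with digit 1), and C(n) ≡ 0 (mod 3) otherwise. -/
open Nat

instance : Fact (Nat.Prime 3) := ⟨by norm_num⟩

/-- single-step Lucas in `ZMod 3` -/
lemma lucas3 (n k : ℕ) :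
    ((n.choose k : ℕ) : ZMod 3) =
      ((n % 3).choose (k % 3) : ℕ) * (((n / 3).choose (k / 3) : ℕ) : ZMod 3) := by
  have h := @Choose.choose_modEq_choose_mod_mul_choose_div n k 3 _
  have := (ZMod.intCast_eq_intCast_iff _ _ _).mpr h
  push_cast at this ⊢
  exact this

lemma centralBinom_step (t r : ℕ) (hr : r < 3) :
    ((Nat.centralBinom (3 * t + r) : ℕ) : ZMod 3) =
      (if r = 2 then 0 else if r = 1 then -1 else 1) * (Nat.centralBinom t : ZMod 3) := by
  unfold Nat.centralBinom
  interval_cases r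
  · rw [show 2 * (3 * t + 0) = 3 * (2 * t) by ring, lucas3]
    simp [Nat.mul_div_cancel_left, Nat.mul_mod_right]
  · rw [show 2 * (3 * t + 1) = 3 * (2 * t) + 2 by ring, lucas3]
    have h1 : (3 * (2 * t) + 2) % 3 = 2 := by omega
    have h2 : (3 * (2 * t) + 2) / 3 = 2 * t := by omega
    have h3 : (3 * t + 1) % 3 = 1 := by omega
    have h4 : (3 * t + 1) / 3 = t := by omega
    rw [h1, h2, h3, h4]
    norm_num
    have h5 : (2 : ZMod 3) = -1 := by decide
    rw [h5]
    ring
  · rw [show 2 * (3 * t + 2) = 3 * (2 * t + 1) + 1 by ring, lucas3]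
    have h1 : (3 * (2 * t + 1) + 1) % 3 = 1 := by omega
    have h3 : (3 * t + 2) % 3 = 2 := by omega
    rw [h1, h3]
    norm_num

lemma two_mul_choose (t : ℕ) : Nat.centralBinom (t + 1) = 2 * (2 * t + 1).choose t := by
  have hsym : (2 * t + 1).choose (t + 1) = (2 * t + 1).choose t := by
    have h := Nat.choose_symm (show t + 1 ≤ 2 * t + 1 by omega)
    rw [show 2 * t + 1 - (t + 1) = t by omega] at h
    exact h.symm
  unfold Nat.centralBinom
  rw [show 2 * (t + 1) = (2 * t + 1) + 1 by ring, Nat.choose_succ_succ', hsym]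
  ring

lemma catalan_mul_two (n : ℕ) : (2 * n + 1) * catalan n = (2 * n + 1).choose n := by
  apply Nat.eq_of_mul_eq_mul_left (show 0 < 2 * (n + 1) by omega)
  calc 2 * (n + 1) * ((2 * n + 1) * catalan n)
      = 2 * (2 * n + 1) * ((n + 1) * catalan n) := by ring
    _ = 2 * (2 * n + 1) * Nat.centralBinom n := by rw [succ_mul_catalan_eq_centralBinom]
    _ = (n + 1) * Nat.centralBinom (n + 1) := (Nat.succ_mul_centralBinom_succ n).symm
    _ = (n + 1) * (2 * ((2 * n + 1).choose n)) := by rw [two_mul_choose]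
    _ = 2 * (n + 1) * ((2 * n + 1).choose n) := by ring

lemma natcast_mod3 (a : ℕ) : ((a : ℕ) : ZMod 3) = ((a % 3 : ℕ) : ZMod 3) :=
  (ZMod.natCast_mod a 3).symm

lemma catalan_zmod3 (n : ℕ) :
    ((catalan n : ℕ) : ZMod 3) = (Nat.centralBinom ((n + 1) / 3) : ZMod 3) := by
  obtain ⟨t, r, hr, rfl⟩ : ∃ t r, r < 3 ∧ n = 3 * t + r :=
    ⟨n / 3, n % 3, Nat.mod_lt _ (by norm_num), by omega⟩
  have two_inv : ∀ a b : ZMod 3, 2 * a = 2 * b → a = b := by decide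
  have hB := congrArg (Nat.cast : ℕ → ZMod 3)
    (succ_mul_catalan_eq_centralBinom (3 * t + r))
  rw [Nat.cast_mul, natcast_mod3 (3 * t + r + 1)] at hB
  interval_cases r
  · -- n = 3t
    have e : (3 * t + 0 + 1) % 3 = 1 := by omega
    rw [e] at hB
    norm_num at hB
    have hq : (3 * t + 0 + 1) / 3 = t := by omega
    rw [hq, Nat.add_zero, hB]
    have := centralBinom_step t 0 (by norm_num)
    simpa using this
  · -- n = 3t+1
    have e : (3 * t + 1 + 1) % 3 = 2 := by omega
    rw [e] at hB
    have e2 : ((2 : ℕ) : ZMod 3) = 2 := by decide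
    rw [e2] at hB
    have hq : (3 * t + 1 + 1) / 3 = t := by omega
    rw [hq]
    have hstep := centralBinom_step t 1 (by norm_num)
    norm_num at hstep
    apply two_inv
    rw [hB, hstep]
    show _
    have : ∀ b : ZMod 3, -b = 2 * b := by decide
    exact this _
  · -- n = 3t+2
    have hq : (3 * t + 2 + 1) / 3 = t + 1 := by omega
    rw [hq]
    have hC := congrArg (Nat.cast : ℕ → ZMod 3) (catalan_mul_two (3 * t + 2))
    rw [Nat.cast_mul, natcast_mod3 (2 * (3 * t + 2) + 1)] at hC
    have e : (2 * (3 * t + 2) + 1) % 3 = 2 := by omega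
    rw [e, (by decide : ((2 : ℕ) : ZMod 3) = 2)] at hC
    -- Lucas on choose (2n+1) n
    have hL : (((2 * (3 * t + 2) + 1).choose (3 * t + 2) : ℕ) : ZMod 3)
        = (((2 * t + 1).choose t : ℕ) : ZMod 3) := by
      rw [lucas3]
      have e1 : (2 * (3 * t + 2) + 1) % 3 = 2 := by omega
      have e2 : (2 * (3 * t + 2) + 1) / 3 = 2 * t + 1 := by omega
      have e3 : (3 * t + 2) % 3 = 2 := by omega
      have e4 : (3 * t + 2) / 3 = t := by omega
      rw [e1, e2, e3, e4]
      norm_num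
    have hD := congrArg (Nat.cast : ℕ → ZMod 3) (two_mul_choose t)
    rw [Nat.cast_mul, (by decide : ((2 : ℕ) : ZMod 3) = 2)] at hD
    apply two_inv
    apply two_inv
    calc (2 : ZMod 3) * (2 * ((catalan (3 * t + 2) : ℕ) : ZMod 3))
        = 2 * (((2 * (3 * t + 2) + 1).choose (3 * t + 2) : ℕ) : ZMod 3) := by rw [hC]
      _ = 2 * (((2 * t + 1).choose t : ℕ) : ZMod 3) := by rw [hL]
      _ = (Nat.centralBinom (t + 1) : ZMod 3) := hD.symm
      _ = 2 * (2 * (Nat.centralBinom (t + 1) : ZMod 3)) := by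
          rw [← mul_assoc, (by decide : (2 : ZMod 3) * 2 = 1), one_mul]

lemma centralBinom_digits (q : ℕ) :
    ((∀ d ∈ Nat.digits 3 q, d = 0 ∨ d = 1) →
      (Nat.centralBinom q : ZMod 3) = (-1) ^ ((Nat.digits 3 q).count 1)) ∧
    (¬ (∀ d ∈ Nat.digits 3 q, d = 0 ∨ d = 1) →
      (Nat.centralBinom q : ZMod 3) = 0) := by
  induction q using Nat.strong_induction_on with
  | _ q ih =>
    rcases Nat.eq_zero_or_pos q with hq | hq
    · subst hq
      simp [Nat.centralBinom]
    · have hdig : Nat.digits 3 q = q % 3 :: Nat.digits 3 (q / 3) :=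
        Nat.digits_def' (by norm_num) hq
      have hlt : q / 3 < q := Nat.div_lt_self hq (by norm_num)
      obtain ⟨ih1, ih2⟩ := ih (q / 3) hlt
      have hqe : q = 3 * (q / 3) + q % 3 := by omega
      have hstep := centralBinom_step (q / 3) (q % 3) (Nat.mod_lt _ (by norm_num))
      rw [← hqe] at hstep
      constructor
      · intro hall
        rw [hdig] at hall
        have hhead := hall (q % 3) List.mem_cons_self
        have htail : ∀ d ∈ Nat.digits 3 (q / 3), d = 0 ∨ d = 1 := fun d hd =>
          hall d (List.mem_cons_of_mem _ hd)
        rw [hdig, List.count_cons, hstep, ih1 htail]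
        rcases hhead with h | h <;> rw [h] <;> simp [pow_succ, neg_mul, mul_comm]
      · intro hnot
        rw [hdig] at hnot
        by_cases htail : ∀ d ∈ Nat.digits 3 (q / 3), d = 0 ∨ d = 1
        · -- head must be bad: q % 3 = 2
          have hhead : q % 3 = 2 := by
            have := Nat.mod_lt q (show 0 < 3 by norm_num)
            by_contra h
            apply hnot
            intro d hd
            rcases List.mem_cons.mp hd with rfl | hd
            · omega
            · exact htail d hd
          rw [hstep, if_pos hhead, zero_mul]
        · rw [hstep, ih2 htail, mul_zero]

theorem catalan_mod_three (n : ℕ) :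
    ((∀ d ∈ (Nat.digits 3 (n + 1)).tail, d = 0 ∨ d = 1) →
      (catalan n : ℤ) ≡ (-1) ^ ((Nat.digits 3 (n + 1)).tail.count 1) [ZMOD 3]) ∧
    (¬ (∀ d ∈ (Nat.digits 3 (n + 1)).tail, d = 0 ∨ d = 1) →
      (catalan n : ℤ) ≡ 0 [ZMOD 3]) := by
  have hdig : Nat.digits 3 (n + 1) = (n + 1) % 3 :: Nat.digits 3 ((n + 1) / 3) :=
    Nat.digits_def' (by norm_num) (Nat.succ_pos n)
  have htail : (Nat.digits 3 (n + 1)).tail = Nat.digits 3 ((n + 1) / 3) := by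
    rw [hdig]; rfl
  rw [htail]
  obtain ⟨h1, h2⟩ := centralBinom_digits ((n + 1) / 3)
  have hc := catalan_zmod3 n
  constructor
  · intro hall
    have : ((catalan n : ℕ) : ZMod 3) = (-1) ^ ((Nat.digits 3 ((n + 1) / 3)).count 1) := by
      rw [hc, h1 hall]
    have h' : (((catalan n : ℤ)) : ZMod 3) =
        ((((-1) ^ ((Nat.digits 3 ((n + 1) / 3)).count 1) : ℤ)) : ZMod 3) := by
      push_cast
      exact this
    exact_mod_cast (ZMod.intCast_eq_intCast_iff _ _ _).mp h'
  · intro hnot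
    have : ((catalan n : ℕ) : ZMod 3) = 0 := by rw [hc, h2 hnot]
    have h' : (((catalan n : ℤ)) : ZMod 3) = (((0 : ℤ)) : ZMod 3) := by
      push_cast
      exact this
    exact_mod_cast (ZMod.intCast_eq_intCast_iff _ _ _).mp h'
end
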